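/- Fix μ0, μ1 > 0 and real numbers d0, d1, define G(ω) := (ω² − μ0·μ1·(ω² − d0)·(ω² − d1))·sin ω + (μ0·(ω² − d0) + μ1·(ω² − d1))·ω·cos ω, and for each sufficiently large k ∈ ℕ let ω_k denote the unique solution of G(ω) = 0 in the interval (kπ, (k+1)π). Then ω_k = kπ + (1/μ0 + 1/μ1)/(kπ) + O(k⁻²); that is, there exist C > 0 and K ∈ ℕ such that for all k ≥ K, |ω_k − kπ − (1/μ0 + 1/μ1)/(kπ)| ≤ C/k². -/

import Mathlib

open Real Set
set_option maxHeartbeats 1000000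

lemma helper_b (μ0 μ1 d0 d1 c D x t w q : ℝ)
    (hμ0 : 0 < μ0) (hμ1 : 0 < μ1)
    (hc : c = 1/μ0 + 1/μ1) (hD : D = 1 + |d0| + |d1|)
    (hx : 1 ≤ x) (ht0 : 0 < t) (ht1 : t ≤ 1) (htx : x*t ≤ c+1)
    (hwdef : w = x + t)
    (hw2D : 2*D ≤ w^2) (hw28 : 8 ≤ μ0*μ1*w^2)
    (hq : 0 < q) (hmain : x/q ≤ x*t + t^2 - c)
    (hE : (16*μ0*μ1*(c+1)^3 + 4*(1+2*μ0*μ1*D)*(c+1) + μ0*μ1*D^2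
          + 8*(μ0+μ1)*(c+1)^2 + 2*(μ0+μ1)*D) * q < μ0*μ1*x^3) :
    (w^2 - μ0*μ1*(w^2-d0)*(w^2-d1)) * Real.sin t
      + (μ0*(w^2-d0) + μ1*(w^2-d1)) * w * Real.cos t < 0 := by
  have hμc : μ0*μ1*c = μ0 + μ1 := by rw [hc]; field_simp; ring
  have hx0 : 0 < x := lt_of_lt_of_le one_pos hx
  have hw : x ≤ w := by rw [hwdef]; linarith
  have hw0 : 0 < w := lt_of_lt_of_le hx0 hw
  have hwx : w ≤ 2*x := by rw [hwdef]; linarith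
  have hd0D : |d0| ≤ D := by rw [hD]; linarith [abs_nonneg d1]
  have hd1D : |d1| ≤ D := by rw [hD]; linarith [abs_nonneg d0]
  have hD0 : 0 ≤ D := le_trans (abs_nonneg d0) hd0D
  have hd0a : d0 ≤ D := le_trans (le_abs_self d0) hd0D
  have hd0b : -D ≤ d0 := neg_le.mp (le_trans (neg_le_abs d0) hd0D)
  have hd1a : d1 ≤ D := le_trans (le_abs_self d1) hd1D
  have hd1b : -D ≤ d1 := neg_le.mp (le_trans (neg_le_abs d1) hd1D)
  have hP0 : w^2/2 ≤ w^2 - d0 := by linarith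
  have hP0' : w^2 - d0 ≤ 3/2*w^2 := by linarith
  have hP1 : w^2/2 ≤ w^2 - d1 := by linarith
  have hP1' : w^2 - d1 ≤ 3/2*w^2 := by linarith
  have hprod_lb : w^2/2*(w^2/2) ≤ (w^2-d0)*(w^2-d1) :=
    mul_le_mul hP0 hP1 (by positivity) (by linarith)
  have hprod_ub : (w^2-d0)*(w^2-d1) ≤ (3/2*w^2)*(3/2*w^2) :=
    mul_le_mul hP0' hP1' (by linarith) (by positivity)
  have hμμ : 0 < μ0*μ1 := mul_pos hμ0 hμ1
  have hA : w^2 - μ0*μ1*(w^2-d0)*(w^2-d1) ≤ 0 := by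
    linarith only [mul_le_mul_of_nonneg_left hprod_lb hμμ.le,
      mul_le_mul_of_nonneg_right hw28 (sq_nonneg w), sq_nonneg w]
  have hB : 0 ≤ μ0*(w^2-d0) + μ1*(w^2-d1) := by
    linarith only [mul_le_mul_of_nonneg_left hP0 hμ0.le,
      mul_le_mul_of_nonneg_left hP1 hμ1.le,
      mul_nonneg hμ0.le (sq_nonneg w), mul_nonneg hμ1.le (sq_nonneg w)]
  have hsin : t - t^3/4 ≤ Real.sin t := by have := Real.sin_gt_sub_cube ht0; linarith [pow_pos ht0 3]
  have hcos : Real.cos t ≤ 1 := Real.cos_le_one t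
  have step1 : (w^2 - μ0*μ1*(w^2-d0)*(w^2-d1)) * Real.sin t
      ≤ (w^2 - μ0*μ1*(w^2-d0)*(w^2-d1)) * (t - t^3/4) := by
    linarith only [mul_nonneg (neg_nonneg.mpr hA) (sub_nonneg.mpr hsin)]
  have step2 : (μ0*(w^2-d0) + μ1*(w^2-d1)) * w * Real.cos t
      ≤ (μ0*(w^2-d0) + μ1*(w^2-d1)) * w := by
    linarith only [mul_nonneg (mul_nonneg hB hw0.le) (sub_nonneg.mpr hcos)]
  -- polynomial bounds
  have hw2 : w^2 ≤ 4*x^2 := le_of_le_of_eq (pow_le_pow_left₀ hw0.le hwx 2) (by ring)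
  have hw3x : x^3 ≤ w^3 := pow_le_pow_left₀ hx0.le hw 3
  have hw4 : w^4 ≤ 16*x^4 := le_of_le_of_eq (pow_le_pow_left₀ hw0.le hwx 4) (by ring)
  have ht3 : t^3*x^3 ≤ (c+1)^3 :=
    le_of_eq_of_le (by ring) (pow_le_pow_left₀ (mul_nonneg hx0.le ht0.le) htx 3)
  have hc0 : 0 < c := by rw [hc]; positivity
  have hwt : w*t = x*t + t^2 := by rw [hwdef]; ring
  have hδ : x/q ≤ w*t - c := by linarith [hmain, hwt]
  have hδ0 : 0 < w*t - c := lt_of_lt_of_le (by positivity) hδ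
  have hmainb : μ0*μ1*(x^3*(x/q)) ≤ μ0*μ1*(w^3*(w*t - c)) :=
    mul_le_mul_of_nonneg_left
      (mul_le_mul hw3x hδ (by positivity) (by positivity)) hμμ.le
  have hw2t : w^2*t ≤ 4*(c+1)*x := by
    linarith only [mul_le_mul_of_nonneg_right hw2 ht0.le,
      mul_le_mul_of_nonneg_left htx (by positivity : (0:ℝ) ≤ 4*x)]
  have hd0d1 : -(D^2) ≤ d0*d1 := by
    linarith only [neg_abs_le (d0*d1), abs_mul d0 d1,
      mul_le_mul hd0D hd1D (abs_nonneg d1) hD0]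
  have r1a : (1+μ0*μ1*(d0+d1))*(w^2*t) ≤ (1+2*μ0*μ1*D)*(4*(c+1)*x) := by
    linarith only [mul_nonneg (mul_nonneg hμμ.le (by linarith : (0:ℝ) ≤ 2*D - (d0+d1)))
        (mul_nonneg (sq_nonneg w) ht0.le),
      mul_le_mul_of_nonneg_left hw2t (by positivity : (0:ℝ) ≤ 1+2*μ0*μ1*D)]
  have r1b : -(μ0*μ1*(d0*d1))*t ≤ μ0*μ1*D^2*x := by
    linarith only [mul_nonneg (mul_nonneg hμμ.le (by linarith : (0:ℝ) ≤ D^2 + d0*d1)) ht0.le,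
      mul_nonneg (mul_nonneg hμμ.le (sq_nonneg D)) (by linarith : (0:ℝ) ≤ x - t)]
  have hw4t3 : w^4*t^3 ≤ 16*(c+1)^3*x := by
    linarith only [mul_le_mul_of_nonneg_right hw4 (by positivity : (0:ℝ) ≤ t^3),
      mul_le_mul_of_nonneg_left ht3 (by positivity : (0:ℝ) ≤ 16*x)]
  have hnAub : μ0*μ1*((w^2-d0)*(w^2-d1)) - w^2 ≤ 3*(μ0*μ1)*w^4 := by
    linarith only [mul_le_mul_of_nonneg_left hprod_ub hμμ.le, sq_nonneg w,
      mul_nonneg hμμ.le (by positivity : (0:ℝ) ≤ w^4)]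
  have r2 : (μ0*μ1*((w^2-d0)*(w^2-d1)) - w^2)*(t^3/4) ≤ 16*μ0*μ1*(c+1)^3*x := by
    linarith only [mul_le_mul_of_nonneg_right hnAub (by positivity : (0:ℝ) ≤ t^3/4),
      mul_le_mul_of_nonneg_left hw4t3 (by positivity : (0:ℝ) ≤ 3/4*(μ0*μ1)),
      mul_nonneg (mul_nonneg hμμ.le (by positivity : (0:ℝ) ≤ (c+1)^3)) hx0.le]
  have r3 : -(μ0*d0+μ1*d1)*w ≤ 2*(μ0+μ1)*D*x := by
    have h1 : -(μ0*d0+μ1*d1) ≤ (μ0+μ1)*D := by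
      linarith only [mul_le_mul_of_nonneg_left hd0b hμ0.le, mul_le_mul_of_nonneg_left hd1b hμ1.le]
    linarith only [mul_le_mul_of_nonneg_right h1 hw0.le,
      mul_le_mul_of_nonneg_left hwx (by positivity : (0:ℝ) ≤ (μ0+μ1)*D)]
  have key : (w^2 - μ0*μ1*(w^2-d0)*(w^2-d1))*(t - t^3/4) + (μ0*(w^2-d0)+μ1*(w^2-d1))*w
      = -(μ0*μ1*(w^3*(w*t-c)))
        + (1+μ0*μ1*(d0+d1))*(w^2*t) + (-(μ0*μ1*(d0*d1))*t)
        + ((μ0*μ1*((w^2-d0)*(w^2-d1)) - w^2)*(t^3/4))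
        + (-(μ0*d0+μ1*d1)*w) := by
    linear_combination (-(w^3)) * hμc
  have hEx : (16*μ0*μ1*(c+1)^3 + 4*(1+2*μ0*μ1*D)*(c+1) + μ0*μ1*D^2
        + 8*(μ0+μ1)*(c+1)^2 + 2*(μ0+μ1)*D) * x < μ0*μ1*(x^3*(x/q)) := by
    have h2 := mul_lt_mul_of_pos_right hE (show (0:ℝ) < x/q by positivity)
    calc (16*μ0*μ1*(c+1)^3 + 4*(1+2*μ0*μ1*D)*(c+1) + μ0*μ1*D^2
        + 8*(μ0+μ1)*(c+1)^2 + 2*(μ0+μ1)*D) * x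
        = (16*μ0*μ1*(c+1)^3 + 4*(1+2*μ0*μ1*D)*(c+1) + μ0*μ1*D^2
        + 8*(μ0+μ1)*(c+1)^2 + 2*(μ0+μ1)*D) * q * (x/q) := by field_simp
      _ < μ0*μ1*x^3*(x/q) := h2
      _ = μ0*μ1*(x^3*(x/q)) := by ring
  have hslack : 0 ≤ 8*(μ0+μ1)*(c+1)^2*x :=  by positivity
  linarith only [step1, step2, key, hmainb, r1a, r1b, r2, r3, hEx, hslack]

lemma helper_a (μ0 μ1 d0 d1 c D x t w q : ℝ)
    (hμ0 : 0 < μ0) (hμ1 : 0 < μ1)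
    (hc : c = 1/μ0 + 1/μ1) (hD : D = 1 + |d0| + |d1|)
    (hx : 1 ≤ x) (ht0 : 0 < t) (ht1 : t ≤ 1) (htx : x*t ≤ c+1)
    (hwdef : w = x + t)
    (hw2D : 2*D ≤ w^2) (hw28 : 8 ≤ μ0*μ1*w^2)
    (hq : 0 < q) (hmain : x*t + t^2 - c ≤ -(x/(2*q)))
    (hE : (16*μ0*μ1*(c+1)^3 + 4*(1+2*μ0*μ1*D)*(c+1) + μ0*μ1*D^2
          + 8*(μ0+μ1)*(c+1)^2 + 2*(μ0+μ1)*D) * (2*q) < μ0*μ1*x^3) :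
    0 < (w^2 - μ0*μ1*(w^2-d0)*(w^2-d1)) * Real.sin t
      + (μ0*(w^2-d0) + μ1*(w^2-d1)) * w * Real.cos t := by
  have hμc : μ0*μ1*c = μ0 + μ1 := by rw [hc]; field_simp; ring
  have hx0 : 0 < x := lt_of_lt_of_le one_pos hx
  have hw : x ≤ w := by rw [hwdef]; linarith
  have hw0 : 0 < w := lt_of_lt_of_le hx0 hw
  have hwx : w ≤ 2*x := by rw [hwdef]; linarith
  have hd0D : |d0| ≤ D := by rw [hD]; linarith [abs_nonneg d1]
  have hd1D : |d1| ≤ D := by rw [hD]; linarith [abs_nonneg d0]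
  have hD0 : 0 ≤ D := le_trans (abs_nonneg d0) hd0D
  have hd0a : d0 ≤ D := le_trans (le_abs_self d0) hd0D
  have hd0b : -D ≤ d0 := neg_le.mp (le_trans (neg_le_abs d0) hd0D)
  have hd1a : d1 ≤ D := le_trans (le_abs_self d1) hd1D
  have hd1b : -D ≤ d1 := neg_le.mp (le_trans (neg_le_abs d1) hd1D)
  have hP0 : w^2/2 ≤ w^2 - d0 := by linarith
  have hP0' : w^2 - d0 ≤ 3/2*w^2 := by linarith
  have hP1 : w^2/2 ≤ w^2 - d1 := by linarith
  have hP1' : w^2 - d1 ≤ 3/2*w^2 := by linarith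
  have hprod_lb : w^2/2*(w^2/2) ≤ (w^2-d0)*(w^2-d1) :=
    mul_le_mul hP0 hP1 (by positivity) (by linarith)
  have hμμ : 0 < μ0*μ1 := mul_pos hμ0 hμ1
  have hA : w^2 - μ0*μ1*(w^2-d0)*(w^2-d1) ≤ 0 := by
    linarith only [mul_le_mul_of_nonneg_left hprod_lb hμμ.le,
      mul_le_mul_of_nonneg_right hw28 (sq_nonneg w), sq_nonneg w]
  have hB : 0 ≤ μ0*(w^2-d0) + μ1*(w^2-d1) := by
    linarith only [mul_le_mul_of_nonneg_left hP0 hμ0.le,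
      mul_le_mul_of_nonneg_left hP1 hμ1.le,
      mul_nonneg hμ0.le (sq_nonneg w), mul_nonneg hμ1.le (sq_nonneg w)]
  have hsin : Real.sin t ≤ t := Real.sin_le ht0.le
  have hcos : 1 - t^2/2 ≤ Real.cos t := Real.one_sub_sq_div_two_le_cos
  have step1 : (w^2 - μ0*μ1*(w^2-d0)*(w^2-d1)) * t
      ≤ (w^2 - μ0*μ1*(w^2-d0)*(w^2-d1)) * Real.sin t := by
    linarith only [mul_nonneg (neg_nonneg.mpr hA) (sub_nonneg.mpr hsin)]
  have step2 : (μ0*(w^2-d0) + μ1*(w^2-d1)) * w * (1 - t^2/2)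
      ≤ (μ0*(w^2-d0) + μ1*(w^2-d1)) * w * Real.cos t := by
    linarith only [mul_nonneg (mul_nonneg hB hw0.le) (sub_nonneg.mpr hcos)]
  -- polynomial bounds
  have hw2 : w^2 ≤ 4*x^2 := le_of_le_of_eq (pow_le_pow_left₀ hw0.le hwx 2) (by ring)
  have hw3 : w^3 ≤ 8*x^3 := le_of_le_of_eq (pow_le_pow_left₀ hw0.le hwx 3) (by ring)
  have hw3x : x^3 ≤ w^3 := pow_le_pow_left₀ hx0.le hw 3
  have ht2 : t^2*x^3 ≤ (c+1)^2*x := by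
    have h := pow_le_pow_left₀ (mul_nonneg hx0.le ht0.le) htx 2
    linarith only [mul_le_mul_of_nonneg_right h hx0.le]
  have hc0 : 0 < c := by rw [hc]; positivity
  have hwt : w*t = x*t + t^2 := by rw [hwdef]; ring
  have hδ : x/(2*q) ≤ c - w*t := by linarith [hmain, hwt]
  have hmainb : μ0*μ1*(x^3*(x/(2*q))) ≤ μ0*μ1*(w^3*(c - w*t)) :=
    mul_le_mul_of_nonneg_left
      (mul_le_mul hw3x hδ (by positivity) (by positivity)) hμμ.le
  have hw2t : w^2*t ≤ 4*(c+1)*x := by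
    linarith only [mul_le_mul_of_nonneg_right hw2 ht0.le,
      mul_le_mul_of_nonneg_left htx (by positivity : (0:ℝ) ≤ 4*x)]
  have hd0d1' : d0*d1 ≤ D^2 := by
    linarith only [le_abs_self (d0*d1), abs_mul d0 d1,
      mul_le_mul hd0D hd1D (abs_nonneg d1) hD0]
  have r1a : -((1+2*μ0*μ1*D)*(4*(c+1)*x)) ≤ (1+μ0*μ1*(d0+d1))*(w^2*t) := by
    have h2Dd : (0:ℝ) ≤ 2 + μ0*μ1*(d0+d1+2*D) := by
      linarith only [mul_le_mul_of_nonneg_left (show -(2*D) ≤ d0+d1 by linarith) hμμ.le]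
    linarith only [mul_nonneg h2Dd (mul_nonneg (sq_nonneg w) ht0.le),
      mul_le_mul_of_nonneg_left hw2t (by positivity : (0:ℝ) ≤ 1+2*μ0*μ1*D)]
  have r1b : -(μ0*μ1*D^2*x) ≤ -(μ0*μ1*(d0*d1))*t := by
    linarith only [mul_nonneg (mul_nonneg hμμ.le (show (0:ℝ) ≤ D^2 - d0*d1 by linarith)) ht0.le,
      mul_nonneg (mul_nonneg hμμ.le (sq_nonneg D)) (show (0:ℝ) ≤ x - t by linarith)]
  have r3 : -(2*(μ0+μ1)*D*x) ≤ -(μ0*d0+μ1*d1)*w := by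
    have h1 : μ0*d0+μ1*d1 ≤ (μ0+μ1)*D := by
      linarith only [mul_le_mul_of_nonneg_left hd0a hμ0.le, mul_le_mul_of_nonneg_left hd1a hμ1.le]
    linarith only [mul_le_mul_of_nonneg_right h1 hw0.le,
      mul_le_mul_of_nonneg_left hwx (by positivity : (0:ℝ) ≤ (μ0+μ1)*D)]
  have hBub : μ0*(w^2-d0) + μ1*(w^2-d1) ≤ 2*(μ0+μ1)*w^2 := by
    linarith only [mul_le_mul_of_nonneg_left hP0' hμ0.le, mul_le_mul_of_nonneg_left hP1' hμ1.le,
      mul_nonneg hμ0.le (sq_nonneg w), mul_nonneg hμ1.le (sq_nonneg w)]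
  have r4 : -(8*(μ0+μ1)*(c+1)^2*x) ≤ -((μ0*(w^2-d0)+μ1*(w^2-d1))*w*(t^2/2)) := by
    have h1 : (μ0*(w^2-d0)+μ1*(w^2-d1))*w*(t^2/2) ≤ 2*(μ0+μ1)*w^2*w*(t^2/2) :=
      mul_le_mul_of_nonneg_right (mul_le_mul_of_nonneg_right hBub hw0.le) (by positivity)
    have h2 : w^3*t^2 ≤ 8*x^3*t^2 :=
      mul_le_mul_of_nonneg_right hw3 (sq_nonneg t)
    have h3 : 8*(μ0+μ1)*(t^2*x^3) ≤ 8*(μ0+μ1)*((c+1)^2*x) :=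
      mul_le_mul_of_nonneg_left ht2 (by positivity)
    have h4 : (μ0+μ1)*(w^3*t^2) ≤ (μ0+μ1)*(8*x^3*t^2) :=
      mul_le_mul_of_nonneg_left h2 (by positivity)
    linarith only [h1, h3, h4]
  have key : (w^2 - μ0*μ1*(w^2-d0)*(w^2-d1))*t + (μ0*(w^2-d0)+μ1*(w^2-d1))*w*(1 - t^2/2)
      = μ0*μ1*(w^3*(c - w*t))
        + (1+μ0*μ1*(d0+d1))*(w^2*t) + (-(μ0*μ1*(d0*d1))*t)
        + (-(μ0*d0+μ1*d1)*w)
        + (-((μ0*(w^2-d0)+μ1*(w^2-d1))*w*(t^2/2))) := by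
    linear_combination (-(w^3)) * hμc
  have hEx : (16*μ0*μ1*(c+1)^3 + 4*(1+2*μ0*μ1*D)*(c+1) + μ0*μ1*D^2
        + 8*(μ0+μ1)*(c+1)^2 + 2*(μ0+μ1)*D) * x < μ0*μ1*(x^3*(x/(2*q))) := by
    have h2 := mul_lt_mul_of_pos_right hE (show (0:ℝ) < x/(2*q) by positivity)
    calc (16*μ0*μ1*(c+1)^3 + 4*(1+2*μ0*μ1*D)*(c+1) + μ0*μ1*D^2
        + 8*(μ0+μ1)*(c+1)^2 + 2*(μ0+μ1)*D) * x
        = (16*μ0*μ1*(c+1)^3 + 4*(1+2*μ0*μ1*D)*(c+1) + μ0*μ1*D^2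
        + 8*(μ0+μ1)*(c+1)^2 + 2*(μ0+μ1)*D) * (2*q) * (x/(2*q)) := by field_simp
      _ < μ0*μ1*x^3*(x/(2*q)) := h2
      _ = μ0*μ1*(x^3*(x/(2*q))) := by ring
  have hslack : 0 ≤ 16*μ0*μ1*(c+1)^3*x := by positivity
  linarith only [step1, step2, key, hmainb, r1a, r1b, r3, r4, hEx, hslack]


/-- The large zeros ω_k ∈ (kπ,(k+1)π) of G satisfy
ω_k = kπ + (1/μ0 + 1/μ1)/(kπ) + O(k⁻²). -/
theorem characteristic_zeros_asymptotics
    (μ0 μ1 d0 d1 : ℝ) (hμ0 : 0 < μ0) (hμ1 : 0 < μ1)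
    (G : ℝ → ℝ)
    (hG : ∀ ω, G ω = (ω^2 - μ0*μ1*(ω^2 - d0)*(ω^2 - d1)) * Real.sin ω
        + (μ0*(ω^2 - d0) + μ1*(ω^2 - d1)) * ω * Real.cos ω)
    (ω : ℕ → ℝ) (K₀ : ℕ)
    (hω : ∀ k : ℕ, K₀ ≤ k →
      ω k ∈ Ioo ((k:ℝ)*π) (((k:ℝ)+1)*π) ∧ G (ω k) = 0 ∧
      ∀ ω' ∈ Ioo ((k:ℝ)*π) (((k:ℝ)+1)*π), G ω' = 0 → ω' = ω k) :
    ∃ C : ℝ, 0 < C ∧ ∃ K : ℕ, ∀ k : ℕ, K ≤ k →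
      |ω k - (k:ℝ)*π - (1/μ0 + 1/μ1)/((k:ℝ)*π)| ≤ C / (k:ℝ)^2 := by
  have hμμ : 0 < μ0*μ1 := mul_pos hμ0 hμ1
  obtain ⟨c, hc⟩ : ∃ c : ℝ, c = 1/μ0 + 1/μ1 := ⟨_, rfl⟩
  obtain ⟨D, hD⟩ : ∃ D : ℝ, D = 1 + |d0| + |d1| := ⟨_, rfl⟩
  obtain ⟨E, hE⟩ : ∃ E : ℝ, E = 16*μ0*μ1*(c+1)^3 + 4*(1+2*μ0*μ1*D)*(c+1) + μ0*μ1*D^2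
          + 8*(μ0+μ1)*(c+1)^2 + 2*(μ0+μ1)*D := ⟨_, rfl⟩
  have hc0 : 0 < c := by rw [hc]; positivity
  have hD1 : 1 ≤ D := by rw [hD]; linarith [abs_nonneg d0, abs_nonneg d1]
  have hD0 : 0 ≤ D := by linarith
  have hc1 : (0:ℝ) < c + 1 := by linarith
  have hE0 : 0 ≤ E := by
    rw [hE]
    have e1 : 0 < 16*μ0*μ1*(c+1)^3 := by
      have := pow_pos hc1 3; positivity
    have e2 : 0 < 4*(1+2*μ0*μ1*D)*(c+1) := by
      have h : 0 < 1+2*μ0*μ1*D := by linarith [mul_nonneg hμμ.le hD0]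
      positivity
    have e3 : 0 ≤ μ0*μ1*D^2 := by positivity
    have e4 : 0 < 8*(μ0+μ1)*(c+1)^2 := by positivity
    have e5 : 0 ≤ 2*(μ0+μ1)*D := by positivity
    linarith
  obtain ⟨N, hN⟩ : ∃ N : ℝ, N = 2*c + 2*D + 8/(μ0*μ1) + 4/c + 2*(c+1)^2
      + (2*E+1)/(μ0*μ1) + 8 := ⟨_, rfl⟩
  refine ⟨1, one_pos, K₀ + ⌈N⌉₊ + 1, ?_⟩
  intro k hk
  have hkK₀ : K₀ ≤ k := by omega
  have hkceil : ⌈N⌉₊ ≤ k := by omega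
  have hkN : N ≤ (k:ℝ) := le_trans (Nat.le_ceil N) (Nat.cast_le.mpr hkceil)
  -- individual bounds on k
  have p1 : (0:ℝ) < 2*c := by linarith
  have p2 : (0:ℝ) < 2*D := by linarith
  have p3 : (0:ℝ) < 8/(μ0*μ1) := by positivity
  have p4 : (0:ℝ) < 4/c := by positivity
  have p5 : (0:ℝ) < 2*(c+1)^2 := by positivity
  have p6 : (0:ℝ) ≤ (2*E+1)/(μ0*μ1) := by positivity
  have hN1 : 2*c ≤ (k:ℝ) := by rw [hN] at hkN; linarith
  have hN2 : 2*D ≤ (k:ℝ) := by rw [hN] at hkN; linarith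
  have hN3 : 8/(μ0*μ1) ≤ (k:ℝ) := by rw [hN] at hkN; linarith
  have hN4 : 4/c ≤ (k:ℝ) := by rw [hN] at hkN; linarith
  have hN5 : 2*(c+1)^2 ≤ (k:ℝ) := by rw [hN] at hkN; linarith
  have hN6 : (2*E+1)/(μ0*μ1) ≤ (k:ℝ) := by rw [hN] at hkN; linarith
  have hN7 : (8:ℝ) ≤ (k:ℝ) := by rw [hN] at hkN; linarith
  have hk0 : (0:ℝ) < (k:ℝ) := by linarith
  have hπ1 : (1:ℝ) < π := by linarith [Real.pi_gt_three]
  have hπ4 : π < 4 := by linarith [Real.pi_lt_d2]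
  obtain ⟨x, hxdef⟩ : ∃ x : ℝ, x = (k:ℝ)*π := ⟨_, rfl⟩
  obtain ⟨q, hqdef⟩ : ∃ q : ℝ, q = (k:ℝ)^2 := ⟨_, rfl⟩
  have hq0 : (0:ℝ) < q := by rw [hqdef]; positivity
  have hx0 : (0:ℝ) < x := by rw [hxdef]; positivity
  have hkx : (k:ℝ) ≤ x := by rw [hxdef]; linarith [mul_le_mul_of_nonneg_left hπ1.le hk0.le]
  have hx1 : (1:ℝ) ≤ x := by linarith
  have hxq : x ≤ q := by
    rw [hxdef, hqdef]
    linarith [mul_le_mul_of_nonneg_left hπ4.le hk0.le,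
      mul_le_mul_of_nonneg_right (show (4:ℝ) ≤ (k:ℝ) by linarith) hk0.le]
  have hx3 : (k:ℝ)^3 ≤ x^3 := pow_le_pow_left₀ hk0.le hkx 3
  have hx3eq : x^3 = π^3 * (k:ℝ)^3 := by rw [hxdef]; ring
  obtain ⟨t1, ht1def⟩ : ∃ t1 : ℝ, t1 = c/x - 1/q := ⟨_, rfl⟩
  obtain ⟨t2, ht2def⟩ : ∃ t2 : ℝ, t2 = c/x + 1/q := ⟨_, rfl⟩
  -- basic t facts
  have ht20 : 0 < t2 := by rw [ht2def]; positivity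
  have hcx : c/x ≤ 1/2 := by
    rw [div_le_iff₀ hx0]; linarith
  have hq2 : 1/q ≤ 1/2 := by
    rw [hqdef, div_le_div_iff₀ (by positivity) two_pos]
    linarith [mul_le_mul hN7 hN7 (by norm_num : (0:ℝ) ≤ 8) hk0.le]
  have ht21 : t2 ≤ 1 := by rw [ht2def]; linarith
  have hxt2 : x*t2 = c + x/q := by rw [ht2def]; field_simp
  have hxq1 : x/q ≤ 1 := by rw [div_le_one hq0]; linarith
  have htx2 : x*t2 ≤ c+1 := by rw [hxt2]; linarith
  have ht10 : 0 < t1 := by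
    rw [ht1def, sub_pos, div_lt_div_iff₀ hq0 hx0]
    have h4c : 4 ≤ c*(k:ℝ) := by
      rw [div_le_iff₀ hc0] at hN4; linarith
    rw [hxdef, hqdef]
    linarith [mul_le_mul_of_nonneg_right h4c hk0.le, mul_lt_mul_of_pos_left hπ4 hk0]
  have ht12 : t1 < t2 := by rw [ht1def, ht2def]; have := one_div_pos.mpr hq0; linarith
  have ht11 : t1 ≤ 1 := by linarith
  have hxt1 : x*t1 = c - x/q := by rw [ht1def]; field_simp
  have htx1 : x*t1 ≤ c+1 := by
    rw [hxt1]
    have hxqpos : 0 < x/q := by positivity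
    linarith
  -- w² lower bounds
  have hxx2 : x ≤ x^2 := by linarith [mul_le_mul_of_nonneg_left hx1 hx0.le]
  have hx2D : 2*D ≤ x^2 := by linarith
  have hx28 : 8 ≤ μ0*μ1*x^2 := by
    have h8 : 8 ≤ μ0*μ1*(k:ℝ) := by rw [div_le_iff₀ hμμ] at hN3; linarith
    linarith [mul_le_mul_of_nonneg_left hkx hμμ.le, mul_le_mul_of_nonneg_left hxx2 hμμ.le]
  have hsq1 : x^2 ≤ (x+t1)^2 := pow_le_pow_left₀ hx0.le (by linarith) 2
  have hsq2 : x^2 ≤ (x+t2)^2 := pow_le_pow_left₀ hx0.le (by linarith) 2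
  have hw2D1 : 2*D ≤ (x+t1)^2 := by linarith
  have hw281 : 8 ≤ μ0*μ1*(x+t1)^2 := by linarith [mul_le_mul_of_nonneg_left hsq1 hμμ.le]
  have hw2D2 : 2*D ≤ (x+t2)^2 := by linarith
  have hw282 : 8 ≤ μ0*μ1*(x+t2)^2 := by linarith [mul_le_mul_of_nonneg_left hsq2 hμμ.le]
  -- main inequalities
  have hmain2 : x/q ≤ x*t2 + t2^2 - c := by linarith [sq_nonneg t2, hxt2]
  have h2E : 2*E+1 ≤ μ0*μ1*(k:ℝ) := by rw [div_le_iff₀ hμμ] at hN6; linarith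
  have hEb : E * (2*q) < μ0*μ1*x^3 := by
    rw [hqdef]
    linarith [mul_le_mul_of_nonneg_right h2E (sq_nonneg (k:ℝ)),
      mul_le_mul_of_nonneg_left hx3 hμμ.le, pow_pos hk0 2]
  have hEb1 : E * q < μ0*μ1*x^3 := by linarith [mul_nonneg hE0 hq0.le]
  have hmain1 : x*t1 + t1^2 - c ≤ -(x/(2*q)) := by
    have ht1c : t1 ≤ c/x := by
      rw [ht1def]
      have hq1pos : 0 < 1/q := by positivity
      linarith
    have ht1sq : t1^2 ≤ (c/x)^2 := pow_le_pow_left₀ ht10.le ht1c 2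
    have hcc : (c/x)^2 ≤ x/(2*q) := by
      rw [div_pow, div_le_div_iff₀ (by positivity) (by positivity)]
      have h1 : 2*(c+1)^2*(k:ℝ)^2 ≤ (k:ℝ)^3 := by
        linarith [mul_le_mul_of_nonneg_right hN5 (sq_nonneg (k:ℝ))]
      have h2 : c^2 ≤ (c+1)^2 := pow_le_pow_left₀ hc0.le (by linarith) 2
      rw [hqdef]
      calc c^2*(2*(k:ℝ)^2) ≤ (c+1)^2*(2*(k:ℝ)^2) :=
            mul_le_mul_of_nonneg_right h2 (by positivity)
        _ ≤ (k:ℝ)^3 := by linarith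
        _ ≤ x^3 := hx3
        _ = x*x^2 := by ring
    have hsplit : x/q - x/(2*q) = x/(2*q) := by field_simp; ring
    linarith [le_trans ht1sq hcc, hxt1, hsplit]
  -- trig rewriting
  have hcosk : Real.cos ((k:ℝ)*π) = (-1:ℝ)^k := by
    simpa using Real.cos_nat_mul_pi_sub 0 k
  have hsink : Real.sin ((k:ℝ)*π) = 0 := Real.sin_nat_mul_pi k
  have hsin_eq : ∀ t : ℝ, Real.sin (x + t) = (-1:ℝ)^k * Real.sin t := by
    intro t; rw [hxdef, Real.sin_add, hsink, hcosk]; ring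
  have hcos_eq : ∀ t : ℝ, Real.cos (x + t) = (-1:ℝ)^k * Real.cos t := by
    intro t; rw [hxdef, Real.cos_add, hsink, hcosk]; ring
  have hGeq : ∀ t : ℝ, G (x + t) = (-1:ℝ)^k *
      (((x+t)^2 - μ0*μ1*((x+t)^2-d0)*((x+t)^2-d1)) * Real.sin t
        + (μ0*((x+t)^2-d0) + μ1*((x+t)^2-d1)) * (x+t) * Real.cos t) := by
    intro t; rw [hG, hsin_eq, hcos_eq]; ring
  -- sign facts
  have hFa : 0 < ((x+t1)^2 - μ0*μ1*((x+t1)^2-d0)*((x+t1)^2-d1)) * Real.sin t1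
      + (μ0*((x+t1)^2-d0) + μ1*((x+t1)^2-d1)) * (x+t1) * Real.cos t1 :=
    helper_a μ0 μ1 d0 d1 c D x t1 (x+t1) q hμ0 hμ1 hc hD hx1 ht10 ht11 htx1 rfl
      hw2D1 hw281 hq0 hmain1 (by rw [hE] at hEb; exact hEb)
  have hFb : ((x+t2)^2 - μ0*μ1*((x+t2)^2-d0)*((x+t2)^2-d1)) * Real.sin t2
      + (μ0*((x+t2)^2-d0) + μ1*((x+t2)^2-d1)) * (x+t2) * Real.cos t2 < 0 :=
    helper_b μ0 μ1 d0 d1 c D x t2 (x+t2) q hμ0 hμ1 hc hD hx1 ht20 ht21 htx2 rfl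
      hw2D2 hw282 hq0 hmain2 (by rw [hE] at hEb1; exact hEb1)
  have hsq : ((-1:ℝ)^k) * ((-1:ℝ)^k) = 1 := by
    rw [← pow_add, ← two_mul, pow_mul]; norm_num
  -- g = (-1)^k * G
  have hGcont : Continuous G := by
    have hfun : G = fun y => (y^2 - μ0*μ1*(y^2 - d0)*(y^2 - d1)) * Real.sin y
        + (μ0*(y^2 - d0) + μ1*(y^2 - d1)) * y * Real.cos y := funext hG
    rw [hfun]; fun_prop
  have hgcont : Continuous (fun y => (-1:ℝ)^k * G y) := by fun_prop
  have hga : 0 < (-1:ℝ)^k * G (x + t1) := by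
    rw [hGeq t1, ← mul_assoc, hsq, one_mul]; exact hFa
  have hgb : (-1:ℝ)^k * G (x + t2) < 0 := by
    rw [hGeq t2, ← mul_assoc, hsq, one_mul]; exact hFb
  have hab : x + t1 ≤ x + t2 := by linarith
  have hIVT := intermediate_value_Ioo' hab (hgcont.continuousOn)
  obtain ⟨z, hz, hgz⟩ := hIVT (Set.mem_Ioo.mpr ⟨hgb, hga⟩)
  have hGz : G z = 0 := by
    rcases mul_eq_zero.mp hgz with h | h
    · exfalso; exact (pow_ne_zero k (by norm_num : (-1:ℝ) ≠ 0)) h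
    · exact h
  have hzmem : z ∈ Ioo ((k:ℝ)*π) (((k:ℝ)+1)*π) := by
    constructor
    · rw [← hxdef]; have := hz.1; linarith
    · have hb : x + t2 < ((k:ℝ)+1)*π := by rw [hxdef]; linarith [ht21, hπ1]
      have := hz.2; linarith
  have hzeq : z = ω k := (hω k hkK₀).2.2 z hzmem hGz
  rw [← hzeq, ← hc, ← hxdef]
  rw [abs_le]
  have hz1 : x + t1 < z := hz.1
  have hz2 : z < x + t2 := hz.2
  rw [ht1def] at hz1; rw [ht2def] at hz2
  rw [← hqdef]
  constructor <;> [linarith; linarith]
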